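/- Let M be a loopless matroid of rank r on a finite ground set E. For a linear order σ on E, let bc_σ(M) be the σ-broken circuit complex of M, let f_i(bc_σ(M)) be the number of its i-element faces, and let h_{bc_σ(M)}(q) = Σ_{i=0}^{r} f_i(bc_σ(M)) q^i (1−q)^{r−i}. Then for any two linear orders σ and τ on E, h_{bc_σ(M)}(q) = h_{bc_τ(M)}(q); that is, although the broken circuit complex depends on the chosen order, its h-polynomial does not. -/

import Mathlib

open scoped BigOperators

noncomputable section

open Polynomial

/-- A circuit of a matroid `M`: a minimal dependent subset of the ground set. -/
def MatCircuit {α : Type*} (M : Matroid α) (C : Set α) : Prop :=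
  M.Dep C ∧ ∀ D ⊂ C, ¬ M.Dep D

/-- `T` is a face of the `σ`-broken circuit complex of `M`: a subset of the ground set
containing no `σ`-broken circuit (a circuit minus its `σ`-smallest element). -/
def BCFace {α : Type*} (M : Matroid α) (σ : LinearOrder α) (T : Set α) : Prop :=
  T ⊆ M.E ∧
    ¬ ∃ (C : Set α) (i : α), MatCircuit M C ∧ i ∈ C ∧ (∀ j ∈ C, σ.le i j) ∧ C \ {i} ⊆ T

/-- The number of `i`-element faces of the `σ`-broken circuit complex of `M`. -/
def bcFaceCount {α : Type*} (M : Matroid α) (σ : LinearOrder α) (i : ℕ) : ℕ :=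
  {T : Set α | BCFace M σ T ∧ T.ncard = i}.ncard

/-- The `h`-polynomial `Σ_{i=0}^{r} f_i q^i (1-q)^{r-i}` of the `σ`-broken circuit
complex of `M`, formed with respect to the rank `r`. -/
def bcHPoly {α : Type*} (M : Matroid α) (σ : LinearOrder α) (r : ℕ) : Polynomial ℤ :=
  ∑ i ∈ Finset.range (r + 1),
    Polynomial.C (bcFaceCount M σ i : ℤ) * Polynomial.X ^ i
      * (1 - Polynomial.X) ^ (r - i)

namespace BCAux
open Set
open Set

variable {α : Type*} {M : Matroid α} {C C1 C2 X S : Set α} {e f x : α}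

lemma dep_contains_circuit_aux :
    ∀ n, ∀ X : Set α, X.Finite → X.ncard ≤ n → M.Dep X → ∃ C ⊆ X, MatCircuit M C := by
  intro n
  induction n with
  | zero =>
    intro X hfin hcard hX
    have hX0 : X = ∅ := by
      rw [← Set.ncard_eq_zero hfin]; omega
    refine ⟨X, subset_rfl, hX, ?_⟩
    intro D hD
    rw [hX0] at hD
    exact absurd hD.2 (by simp [hD.1.antisymm (Set.empty_subset D)])
  | succ n ih =>
    intro X hfin hcard hX
    by_cases h : ∀ D ⊂ X, ¬ M.Dep D
    · exact ⟨X, subset_rfl, hX, h⟩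
    · push_neg at h
      obtain ⟨D, hDX, hD⟩ := h
      have hDfin : D.Finite := hfin.subset hDX.subset
      have : D.ncard ≤ n := by
        have := Set.ncard_lt_ncard hDX hfin
        omega
      obtain ⟨C, hCD, hC⟩ := ih D hDfin this hD
      exact ⟨C, hCD.trans hDX.subset, hC⟩

lemma dep_contains_circuit (hfin : X.Finite) (hX : M.Dep X) :
    ∃ C ⊆ X, MatCircuit M C :=
  dep_contains_circuit_aux X.ncard X hfin le_rfl hX

lemma circuit_dep (hC : MatCircuit M C) : M.Dep C := hC.1

lemma circuit_subset_ground (hC : MatCircuit M C) : C ⊆ M.E := hC.1.2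

lemma circuit_diff_indep (hC : MatCircuit M C) (hx : x ∈ C) :
    M.Indep (C \ {x}) := by
  by_contra h
  exact hC.2 (C \ {x}) (Set.sdiff_singleton_ssubset.2 hx)
    ⟨h, (diff_subset).trans (circuit_subset_ground hC)⟩

lemma circuit_mem_closure (hC : MatCircuit M C) (hx : x ∈ C) :
    x ∈ M.closure (C \ {x}) := by
  have hI := circuit_diff_indep hC hx
  have hdep : M.Dep (insert x (C \ {x})) := by
    rw [Set.insert_diff_singleton, Set.insert_eq_self.2 hx]
    exact hC.1
  exact (hI.insert_dep_iff.1 hdep).1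

/-- Strong circuit elimination, in the form needed. -/
lemma strong_elim (hE : M.E.Finite) (hC1 : MatCircuit M C1) (hC2 : MatCircuit M C2)
    (he1 : e ∈ C1) (he2 : e ∈ C2) (hf2 : f ∈ C2) (hf1 : f ∉ C1) (hfe : f ≠ e) :
    ∃ D, MatCircuit M D ∧ f ∈ D ∧ D ⊆ (C1 ∪ C2) \ {e} := by
  set X := (C1 ∪ C2) \ {e, f} with hXdef
  have hXE : X ⊆ M.E :=
    diff_subset.trans (union_subset (circuit_subset_ground hC1) (circuit_subset_ground hC2))
  have h1sub : C1 \ {e} ⊆ X := by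
    intro a ha
    simp only [hXdef, Set.mem_diff, Set.mem_union, Set.mem_insert_iff, Set.mem_singleton_iff]
    have := ha.2
    simp only [Set.mem_singleton_iff] at this
    exact ⟨Or.inl ha.1, by rintro (rfl | rfl) <;> [exact this rfl; exact hf1 ha.1]⟩
  have h2sub : C2 \ {f} ⊆ insert e X := by
    intro a ha
    have ha2 := ha.2
    simp only [Set.mem_singleton_iff] at ha2
    by_cases hae : a = e
    · exact Or.inl hae
    · exact Or.inr ⟨Or.inr ha.1, by
        simp only [Set.mem_insert_iff, Set.mem_singleton_iff]
        rintro (rfl | rfl) <;> [exact hae rfl; exact ha2 rfl]⟩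
  have heX : e ∈ M.closure X :=
    M.closure_subset_closure h1sub (circuit_mem_closure hC1 he1)
  have hfX : f ∈ M.closure X := by
    have := M.closure_subset_closure h2sub (circuit_mem_closure hC2 hf2)
    rwa [Matroid.closure_insert_eq_of_mem_closure heX] at this
  obtain ⟨I, hI⟩ := M.exists_isBasis X hXE
  have hfI : f ∈ M.closure I := by rwa [hI.closure_eq_closure]
  have hfnX : f ∉ X := fun h => h.2 (Or.inr rfl)
  have hfnI : f ∉ I := fun h => hfnX (hI.subset h)
  have hdep : M.Dep (insert f I) := hI.indep.insert_dep_iff.2 ⟨hfI, hfnI⟩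
  have hfin : (insert f I).Finite := hE.subset hdep.2
  obtain ⟨D, hDsub, hD⟩ := dep_contains_circuit hfin hdep
  refine ⟨D, hD, ?_, ?_⟩
  · by_contra hfD
    have : D ⊆ I := fun a ha => ((hDsub ha).resolve_left (fun h => hfD (h ▸ ha)))
    exact hD.1.not_indep (hI.indep.subset this)
  · intro a ha
    rcases hDsub ha with rfl | haI
    · exact ⟨Or.inr hf2, by simp [hfe]⟩
    · have haX := hI.subset haI
      refine ⟨haX.1, fun h => haX.2 ?_⟩
      simp only [Set.mem_singleton_iff] at h
      simp [h]

end BCAux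

section Part2
open Set
namespace BCAux

variable {α : Type*} {M : Matroid α} {σ : LinearOrder α} {S : Set α} {e b : α}

/-- The set of minimal elements of circuits whose associated broken circuit lies in `S`. -/
def Wset (M : Matroid α) (σ : LinearOrder α) (S : Set α) : Set α :=
  {e | ∃ C, MatCircuit M C ∧ e ∈ C ∧ (∀ j ∈ C, σ.le e j) ∧ C \ {e} ⊆ S}

lemma Wset_subset_ground : Wset M σ S ⊆ M.E := by
  rintro e ⟨C, hC, heC, -, -⟩
  exact circuit_subset_ground hC heC

lemma Wset_mono {S T : Set α} (h : S ⊆ T) : Wset M σ S ⊆ Wset M σ T := by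
  rintro e ⟨C, hC, heC, hmin, hsub⟩
  exact ⟨C, hC, heC, hmin, hsub.trans h⟩

lemma mem_closure_of_mem_Wset (he : e ∈ Wset M σ S) : e ∈ M.closure (S \ {e}) := by
  obtain ⟨C, hC, heC, -, hsub⟩ := he
  refine M.closure_subset_closure ?_ (circuit_mem_closure hC heC)
  intro a ha
  exact ⟨hsub ha, ha.2⟩

lemma mem_Wset_diff (he : e ∈ Wset M σ S) : e ∈ Wset M σ (S \ {e}) := by
  obtain ⟨C, hC, heC, hmin, hsub⟩ := he
  exact ⟨C, hC, heC, hmin, fun a ha => ⟨hsub ha, ha.2⟩⟩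

/-- The key stability fact: if `e` is the `σ`-least witness for `S`, it is also the
`σ`-least witness for `S ∪ {e}`. -/
lemma min_stable_insert (hE : M.E.Finite) (he : e ∈ Wset M σ S)
    (hmin : ∀ b ∈ Wset M σ S, σ.le e b) (hb : b ∈ Wset M σ (insert e S)) : σ.le e b := by
  letI := σ
  by_contra hlt
  rw [not_le] at hlt
  -- hlt : b < e
  obtain ⟨C'', hC'', hbC'', hbmin, hbsub⟩ := hb
  have hbe : b ≠ e := ne_of_lt hlt
  have heC2 : e ∈ C'' := by
    by_contra heC2
    refine absurd (hmin b ⟨C'', hC'', hbC'', hbmin, fun a ha => ?_⟩) (not_le.2 hlt)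
    rcases hbsub ha with rfl | h
    · exact absurd ha.1 heC2
    · exact h
  obtain ⟨C, hC, heC, hemin, hesub⟩ := he
  have hbC : b ∉ C := fun h => absurd (hemin b h) (not_le.2 hlt)
  obtain ⟨D, hD, hbD, hDsub⟩ := strong_elim hE hC hC'' heC heC2 hbC'' hbC hbe
  refine absurd (hmin b ⟨D, hD, hbD, ?_, ?_⟩) (not_le.2 hlt)
  · intro j hj
    rcases (hDsub hj).1 with h | h
    · exact le_of_lt (lt_of_lt_of_le hlt (hemin j h))
    · exact hbmin j h
  · intro a ha
    have haD := hDsub ha.1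
    have hane : a ≠ e := by
      intro h; exact haD.2 (by simp [h])
    have hab : a ≠ b := by
      have := ha.2; simpa using this
    rcases haD.1 with h | h
    · have : a ∈ C \ {e} := ⟨h, by simp [hane]⟩
      exact hesub this
    · have : a ∈ insert e S := hbsub ⟨h, by simp [hab]⟩
      rcases this with rfl | h'
      · exact absurd rfl hane
      · exact h'

end BCAux
end Part2

section Part3
open Set
namespace BCAux

variable {α : Type*} [DecidableEq α] {M : Matroid α} {σ : LinearOrder α} {T : Set α}

lemma bcface_iff : BCFace M σ T ↔ T ⊆ M.E ∧ Wset M σ T = ∅ := by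
  constructor
  · rintro ⟨h1, h2⟩
    refine ⟨h1, Set.eq_empty_iff_forall_notMem.2 ?_⟩
    rintro e ⟨C, hC, heC, hmin, hsub⟩
    exact h2 ⟨C, e, hC, heC, hmin, hsub⟩
  · rintro ⟨h1, h2⟩
    refine ⟨h1, ?_⟩
    rintro ⟨C, i, hC, hiC, hmin, hsub⟩
    exact Set.eq_empty_iff_forall_notMem.1 h2 i ⟨C, hC, hiC, hmin, hsub⟩

/-- A set containing no broken circuit is independent. -/
lemma face_indep (hE : M.E.Finite) (hT : BCFace M σ T) : M.Indep T := by
  by_contra h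
  have hdep : M.Dep T := ⟨h, hT.1⟩
  obtain ⟨C, hCT, hC⟩ := dep_contains_circuit (hE.subset hT.1) hdep
  have hCne : C.Nonempty := by
    rw [Set.nonempty_iff_ne_empty]
    rintro rfl
    exact hC.1.not_indep M.empty_indep
  obtain ⟨e, heC, hmin⟩ :=
    @Set.exists_min_image α α σ C id (hE.subset (circuit_subset_ground hC)) hCne
  have : e ∈ Wset M σ T := ⟨C, hC, heC, hmin, Set.diff_subset.trans hCT⟩
  rw [(bcface_iff.1 hT).2] at this
  exact this

lemma indep_closure_card {I J : Set α} (hI : M.Indep I) (hJ : M.Indep J)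
    (hcl : M.closure I = M.closure J) : I.encard = J.encard := by
  have h1 := hI.isBasis_closure
  have h2 := hJ.isBasis_closure
  rw [← hcl] at h2
  exact h1.encard_eq_encard h2

lemma exists_minw (hE : M.E.Finite) {S : Finset α} (h : (Wset M σ (↑S : Set α)).Nonempty) :
    ∃ e ∈ Wset M σ (↑S : Set α), ∀ b ∈ Wset M σ (↑S : Set α), σ.le e b :=
  @Set.exists_min_image α α σ _ id (hE.subset Wset_subset_ground) h

/-- The `σ`-least witness. -/
noncomputable def minwF (hE : M.E.Finite) {S : Finset α} (h : (Wset M σ (↑S : Set α)).Nonempty) : α :=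
  (exists_minw hE h).choose

lemma minwF_mem (hE : M.E.Finite) {S : Finset α} (h : (Wset M σ (↑S : Set α)).Nonempty) :
    minwF hE h ∈ Wset M σ (↑S : Set α) :=
  (exists_minw hE h).choose_spec.1

lemma minwF_min (hE : M.E.Finite) {S : Finset α} (h : (Wset M σ (↑S : Set α)).Nonempty) :
    ∀ b ∈ Wset M σ (↑S : Set α), σ.le (minwF hE h) b :=
  (exists_minw hE h).choose_spec.2

lemma minwF_eq (hE : M.E.Finite) {S : Finset α} (h : (Wset M σ (↑S : Set α)).Nonempty) {e : α}
    (he : e ∈ Wset M σ (↑S : Set α)) (hmin : ∀ b ∈ Wset M σ (↑S : Set α), σ.le e b) :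
    minwF hE h = e := by
  letI := σ
  exact le_antisymm (minwF_min hE h e he) (hmin _ (minwF_mem hE h))

/-- The involution toggling the least witness. -/
noncomputable def togF (hE : M.E.Finite) {S : Finset α} (h : (Wset M σ (↑S : Set α)).Nonempty) : Finset α :=
  if minwF hE h ∈ S then S.erase (minwF hE h) else insert (minwF hE h) S

lemma minwF_ground (hE : M.E.Finite) {S : Finset α} (h : (Wset M σ (↑S : Set α)).Nonempty) :
    minwF hE h ∈ M.E := Wset_subset_ground (minwF_mem hE h)

lemma togF_subset (hE : M.E.Finite) {S : Finset α} (h : (Wset M σ (↑S : Set α)).Nonempty)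
    (hS : (↑S : Set α) ⊆ M.E) : (↑(togF hE h) : Set α) ⊆ M.E := by
  unfold togF
  split_ifs
  · rw [Finset.coe_erase]
    exact Set.diff_subset.trans hS
  · rw [Finset.coe_insert]
    exact Set.insert_subset (minwF_ground hE h) hS

lemma togF_closure (hE : M.E.Finite) {S : Finset α} (h : (Wset M σ (↑S : Set α)).Nonempty) :
    M.closure ↑(togF hE h) = M.closure ↑S := by
  set e := minwF hE h with hedef
  have hecl : e ∈ M.closure ((↑S : Set α) \ {e}) := mem_closure_of_mem_Wset (minwF_mem hE h)
  unfold togF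
  split_ifs with hmem
  · rw [Finset.coe_erase, ← hedef]
    conv_rhs => rw [show (↑S : Set α) = insert e ((↑S : Set α) \ {e}) by
      rw [Set.insert_diff_singleton, Set.insert_eq_self.2 (by exact_mod_cast hmem)]]
    rw [Matroid.closure_insert_eq_of_mem_closure hecl]
  · rw [Finset.coe_insert, ← hedef]
    exact Matroid.closure_insert_eq_of_mem_closure
      (M.closure_subset_closure Set.diff_subset hecl)

lemma togF_bad (hE : M.E.Finite) {S : Finset α} (h : (Wset M σ (↑S : Set α)).Nonempty) :
    (Wset M σ (↑(togF hE h) : Set α)).Nonempty ∧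
      ∀ hh : (Wset M σ (↑(togF hE h) : Set α)).Nonempty, minwF hE hh = minwF hE h := by
  have hemem := minwF_mem hE h
  have hemin := minwF_min hE h
  unfold togF
  split_ifs with hmem
  · have hcoe : (↑(S.erase (minwF hE h)) : Set α) = (↑S : Set α) \ {minwF hE h} :=
      Finset.coe_erase _ _
    have he' : minwF hE h ∈ Wset M σ (↑(S.erase (minwF hE h)) : Set α) := by
      rw [hcoe]; exact mem_Wset_diff hemem
    have hmin' : ∀ b ∈ Wset M σ (↑(S.erase (minwF hE h)) : Set α), σ.le (minwF hE h) b := by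
      intro b hb
      rw [hcoe] at hb
      exact hemin b (Wset_mono Set.diff_subset hb)
    exact ⟨⟨_, he'⟩, fun hh => minwF_eq hE hh he' hmin'⟩
  · have hcoe : (↑(insert (minwF hE h) S) : Set α) = insert (minwF hE h) (↑S : Set α) :=
      Finset.coe_insert _ _
    have he' : minwF hE h ∈ Wset M σ (↑(insert (minwF hE h) S) : Set α) := by
      rw [hcoe]; exact Wset_mono (Set.subset_insert _ _) hemem
    have hmin' : ∀ b ∈ Wset M σ (↑(insert (minwF hE h) S) : Set α), σ.le (minwF hE h) b := by
      intro b hb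
      rw [hcoe] at hb
      exact min_stable_insert hE hemem hemin hb
    exact ⟨⟨_, he'⟩, fun hh => minwF_eq hE hh he' hmin'⟩

lemma togF_togF (hE : M.E.Finite) {S : Finset α} (h : (Wset M σ (↑S : Set α)).Nonempty)
    (hh : (Wset M σ (↑(togF hE h) : Set α)).Nonempty) : togF hE hh = S := by
  have hkey := (togF_bad hE h).2 hh
  rw [show togF hE hh = if minwF hE hh ∈ togF hE h then (togF hE h).erase (minwF hE hh)
      else insert (minwF hE hh) (togF hE h) from rfl, hkey]
  by_cases hmem : minwF hE h ∈ S
  · rw [show togF hE h = S.erase (minwF hE h) from by unfold togF; rw [if_pos hmem]]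
    rw [if_neg (Finset.notMem_erase _ S), Finset.insert_erase hmem]
  · rw [show togF hE h = insert (minwF hE h) S from by unfold togF; rw [if_neg hmem]]
    rw [if_pos (Finset.mem_insert_self _ S), Finset.erase_insert hmem]

lemma togF_card (hE : M.E.Finite) {S : Finset α} (h : (Wset M σ (↑S : Set α)).Nonempty) :
    ((-1 : ℤ) ^ S.card + (-1 : ℤ) ^ (togF hE h).card) = 0 := by
  unfold togF
  split_ifs with hmem
  · obtain ⟨n, hn⟩ : ∃ n, S.card = n + 1 :=
      ⟨S.card - 1, by have := Finset.card_pos.2 ⟨_, hmem⟩; omega⟩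
    rw [Finset.card_erase_of_mem hmem, hn, Nat.add_sub_cancel, pow_succ]
    ring
  · rw [Finset.card_insert_of_notMem hmem, pow_succ]
    ring

lemma togF_ne (hE : M.E.Finite) {S : Finset α} (h : (Wset M σ (↑S : Set α)).Nonempty) :
    togF hE h ≠ S := by
  intro hcon
  have h2 := togF_card hE h
  rw [hcon] at h2
  have h3 : ((-1 : ℤ)) ^ S.card = 0 := by linarith
  exact pow_ne_zero _ (by norm_num : (-1 : ℤ) ≠ 0) h3

end BCAux
end Part3

section Part4
open Set
namespace BCAux

open Classical

variable {α : Type*} [DecidableEq α] {M : Matroid α} {σ τ : LinearOrder α}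

/-- The closure of a set, as a `Finset`. -/
noncomputable def gF (hE : M.E.Finite) (S : Finset α) : Finset α :=
  (hE.subset (M.closure_subset_ground (↑S : Set α))).toFinset

lemma gF_coe (hE : M.E.Finite) (S : Finset α) :
    (↑(gF hE S) : Set α) = M.closure (↑S : Set α) := Set.Finite.coe_toFinset _

lemma gF_mem_powerset (hE : M.E.Finite) (S : Finset α) :
    gF hE S ∈ hE.toFinset.powerset := by
  rw [Finset.mem_powerset]
  intro a ha
  rw [Set.Finite.mem_toFinset]
  exact M.closure_subset_ground _ (by rw [← gF_coe hE S]; exact_mod_cast ha)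

/-- Faces of the broken-circuit complex with closure `F`. -/
noncomputable def Bset (hE : M.E.Finite) (σ : LinearOrder α) (F : Finset α) : Finset (Finset α) :=
  (hE.toFinset.powerset.filter (fun S : Finset α => gF hE S = F)).filter
    (fun S : Finset α => BCFace M σ (↑S : Set α))

/-- Non-faces with closure `F`. -/
noncomputable def badset (hE : M.E.Finite) (σ : LinearOrder α) (F : Finset α) :
    Finset (Finset α) :=
  (hE.toFinset.powerset.filter (fun S : Finset α => gF hE S = F)).filter
    (fun S : Finset α => ¬ BCFace M σ (↑S : Set α))

lemma mem_pw_subset {hE : M.E.Finite} {S : Finset α} (hS : S ∈ hE.toFinset.powerset) :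
    (↑S : Set α) ⊆ M.E := by
  rw [Finset.mem_powerset] at hS
  intro a ha
  have := hS (by exact_mod_cast ha)
  rwa [Set.Finite.mem_toFinset] at this

lemma mem_badset_bad {hE : M.E.Finite} {F S : Finset α} (hS : S ∈ badset hE σ F) :
    (Wset M σ (↑S : Set α)).Nonempty := by
  unfold badset at hS
  rw [Finset.mem_filter, Finset.mem_filter] at hS
  obtain ⟨⟨hpw, -⟩, hnface⟩ := hS
  rw [Set.nonempty_iff_ne_empty]
  intro hW
  exact hnface (bcface_iff.2 ⟨mem_pw_subset hpw, hW⟩)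

lemma sum_badset_zero (hE : M.E.Finite) (F : Finset α) :
    ∑ S ∈ badset hE σ F, (-1 : ℤ) ^ S.card = 0 := by
  refine Finset.sum_involution
    (fun S hS => togF hE (mem_badset_bad hS)) (fun S hS => togF_card hE _)
    (fun S hS _ => togF_ne hE _) (fun S hS => ?_) (fun S hS => togF_togF hE _ _)
  -- membership
  have hbad := mem_badset_bad hS
  show togF hE hbad ∈ badset hE σ F
  unfold badset at hS ⊢
  rw [Finset.mem_filter, Finset.mem_filter] at hS ⊢
  obtain ⟨⟨hpw, hgF⟩, -⟩ := hS
  have htogbad := (togF_bad hE hbad).1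
  refine ⟨⟨?_, ?_⟩, ?_⟩
  · rw [Finset.mem_powerset]
    intro a ha
    rw [Set.Finite.mem_toFinset]
    exact togF_subset hE hbad (mem_pw_subset hpw) (by exact_mod_cast ha)
  · rw [← hgF]
    apply Finset.coe_injective
    rw [gF_coe, gF_coe, togF_closure hE hbad]
  · intro hface
    have := (bcface_iff.1 hface).2
    rw [this] at htogbad
    exact absurd htogbad (by simp)

lemma sum_fiber_eq (hE : M.E.Finite) (σ : LinearOrder α) (F : Finset α) :
    ∑ S ∈ hE.toFinset.powerset.filter (fun S : Finset α => gF hE S = F), (-1 : ℤ) ^ S.card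
      = ∑ S ∈ Bset hE σ F, (-1 : ℤ) ^ S.card := by
  rw [← Finset.sum_filter_add_sum_filter_not
    (hE.toFinset.powerset.filter (fun S : Finset α => gF hE S = F))
    (fun S : Finset α => BCFace M σ (↑S : Set α)) (fun S : Finset α => (-1 : ℤ) ^ S.card)]
  rw [show ((hE.toFinset.powerset.filter (fun S : Finset α => gF hE S = F)).filter
      (fun S : Finset α => ¬ BCFace M σ (↑S : Set α))) = badset hE σ F from rfl]
  rw [sum_badset_zero hE F, add_zero]
  rfl

lemma mem_Bset_indep {hE : M.E.Finite} {F S : Finset α} (hS : S ∈ Bset hE σ F) :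
    M.Indep (↑S : Set α) ∧ M.closure (↑S : Set α) = (↑F : Set α) := by
  unfold Bset at hS
  rw [Finset.mem_filter, Finset.mem_filter] at hS
  obtain ⟨⟨hpw, hgF⟩, hface⟩ := hS
  exact ⟨face_indep hE hface, by rw [← gF_coe hE S, hgF]⟩

lemma Bset_card_eq {hE : M.E.Finite} {F S S' : Finset α} {σ' : LinearOrder α}
    (hS : S ∈ Bset hE σ F) (hS' : S' ∈ Bset hE σ' F) : S.card = S'.card := by
  obtain ⟨hi, hc⟩ := mem_Bset_indep hS
  obtain ⟨hi', hc'⟩ := mem_Bset_indep hS'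
  have := indep_closure_card hi hi' (by rw [hc, hc'])
  rwa [Set.encard_coe_eq_coe_finsetCard, Set.encard_coe_eq_coe_finsetCard,
    Nat.cast_inj] at this

lemma fiber_count_eq (hE : M.E.Finite) (σ τ : LinearOrder α) (F : Finset α) (i : ℕ) :
    ((Bset hE σ F).filter (fun S : Finset α => S.card = i)).card
      = ((Bset hE τ F).filter (fun S : Finset α => S.card = i)).card := by
  have hsum : ∑ S ∈ Bset hE σ F, (-1 : ℤ) ^ S.card = ∑ S ∈ Bset hE τ F, (-1 : ℤ) ^ S.card := by
    rw [← sum_fiber_eq hE σ F, ← sum_fiber_eq hE τ F]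
  rcases (Bset hE σ F).eq_empty_or_nonempty with hσe | ⟨S₀, hS₀⟩
  · rcases (Bset hE τ F).eq_empty_or_nonempty with hτe | ⟨S₁, hS₁⟩
    · rw [hσe, hτe]
    · exfalso
      rw [hσe, Finset.sum_empty] at hsum
      have hall : ∀ S ∈ Bset hE τ F, (-1 : ℤ) ^ S.card = (-1 : ℤ) ^ S₁.card :=
        fun S hS => by rw [Bset_card_eq hS hS₁]
      rw [Finset.sum_congr rfl hall, Finset.sum_const, nsmul_eq_mul] at hsum
      have : ((Bset hE τ F).card : ℤ) = 0 :=
        by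
          by_contra hne
          exact (mul_ne_zero hne (pow_ne_zero _ (by norm_num : (-1 : ℤ) ≠ 0))) hsum.symm
      simp only [Nat.cast_eq_zero, Finset.card_eq_zero] at this
      rw [this] at hS₁
      exact absurd hS₁ (by simp)
  · have hτne : (Bset hE τ F).Nonempty := by
      rcases (Bset hE τ F).eq_empty_or_nonempty with hτe | h
      · exfalso
        rw [hτe, Finset.sum_empty] at hsum
        have hall : ∀ S ∈ Bset hE σ F, (-1 : ℤ) ^ S.card = (-1 : ℤ) ^ S₀.card :=
          fun S hS => by rw [Bset_card_eq hS hS₀]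
        rw [Finset.sum_congr rfl hall, Finset.sum_const, nsmul_eq_mul] at hsum
        have : ((Bset hE σ F).card : ℤ) = 0 := by
          by_contra hne
          exact (mul_ne_zero hne (pow_ne_zero _ (by norm_num : (-1 : ℤ) ≠ 0))) hsum
        simp only [Nat.cast_eq_zero, Finset.card_eq_zero] at this
        rw [this] at hS₀
        exact absurd hS₀ (by simp)
      · exact h
    obtain ⟨S₁, hS₁⟩ := hτne
    have hk : S₁.card = S₀.card := Bset_card_eq hS₁ hS₀
    -- all cards in both are S₀.card
    have hallσ : ∀ S ∈ Bset hE σ F, S.card = S₀.card := fun S hS => Bset_card_eq hS hS₀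
    have hallτ : ∀ S ∈ Bset hE τ F, S.card = S₀.card := fun S hS => Bset_card_eq hS hS₀
    have hcards : (Bset hE σ F).card = (Bset hE τ F).card := by
      have h1 : ∑ S ∈ Bset hE σ F, (-1 : ℤ) ^ S.card
          = ((Bset hE σ F).card : ℤ) * (-1 : ℤ) ^ S₀.card := by
        rw [Finset.sum_congr rfl (fun S hS => by rw [hallσ S hS]), Finset.sum_const,
          nsmul_eq_mul]
      have h2 : ∑ S ∈ Bset hE τ F, (-1 : ℤ) ^ S.card
          = ((Bset hE τ F).card : ℤ) * (-1 : ℤ) ^ S₀.card := by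
        rw [Finset.sum_congr rfl (fun S hS => by rw [hallτ S hS]), Finset.sum_const,
          nsmul_eq_mul]
      rw [h1, h2] at hsum
      have := mul_right_cancel₀ (pow_ne_zero _ (by norm_num : (-1 : ℤ) ≠ 0)) hsum
      exact_mod_cast this
    by_cases hik : i = S₀.card
    · rw [Finset.filter_true_of_mem (fun S hS => by rw [hallσ S hS, hik]),
        Finset.filter_true_of_mem (fun S hS => by rw [hallτ S hS, hik]), hcards]
    · rw [Finset.filter_false_of_mem (fun S hS => by rw [hallσ S hS]; exact fun h => hik h.symm),
        Finset.filter_false_of_mem (fun S hS => by rw [hallτ S hS]; exact fun h => hik h.symm)]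

/-- The key count: the number of faces of given size does not depend on the order. -/
lemma count_eq (hE : M.E.Finite) (σ τ : LinearOrder α) (i : ℕ) :
    (hE.toFinset.powerset.filter (fun S : Finset α => BCFace M σ (↑S : Set α) ∧ S.card = i)).card
      = (hE.toFinset.powerset.filter (fun S : Finset α => BCFace M τ (↑S : Set α) ∧ S.card = i)).card := by
  rw [Finset.card_eq_sum_card_fiberwise
      (f := gF hE) (t := hE.toFinset.powerset) (fun S _ => gF_mem_powerset hE S),
    Finset.card_eq_sum_card_fiberwise
      (f := gF hE) (t := hE.toFinset.powerset) (fun S _ => gF_mem_powerset hE S)]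
  refine Finset.sum_congr rfl (fun F _ => ?_)
  have hrw : ∀ (σ' : LinearOrder α),
      (hE.toFinset.powerset.filter
          (fun S : Finset α => BCFace M σ' (↑S : Set α) ∧ S.card = i)).filter (fun S : Finset α => gF hE S = F)
        = (Bset hE σ' F).filter (fun S : Finset α => S.card = i) := by
    intro σ'
    ext S
    simp only [Bset, Finset.mem_filter]
    tauto
  rw [hrw σ, hrw τ, fiber_count_eq hE σ τ F i]

end BCAux
end Part4

section Part5
open Set
namespace BCAux

variable {α : Type*} [DecidableEq α] {M : Matroid α}

open Classical

lemma bcFaceCount_eq_card (hE : M.E.Finite) (σ : LinearOrder α) (i : ℕ) :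
    bcFaceCount M σ i
      = (hE.toFinset.powerset.filter
          (fun S : Finset α => BCFace M σ (↑S : Set α) ∧ S.card = i)).card := by
  have himg : {T : Set α | BCFace M σ T ∧ T.ncard = i}
      = (fun S : Finset α => (↑S : Set α)) ''
          ↑(hE.toFinset.powerset.filter
            (fun S : Finset α => BCFace M σ (↑S : Set α) ∧ S.card = i)) := by
    ext T
    simp only [Set.mem_setOf_eq, Set.mem_image, Finset.mem_coe, Finset.mem_filter,
      Finset.mem_powerset]
    constructor
    · rintro ⟨hface, hcard⟩
      have hTfin : T.Finite := hE.subset hface.1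
      refine ⟨hTfin.toFinset, ⟨⟨?_, ?_, ?_⟩, hTfin.coe_toFinset⟩⟩
      · intro a ha
        rw [Set.Finite.mem_toFinset] at ha ⊢
        exact hface.1 ha
      · rw [hTfin.coe_toFinset]; exact hface
      · rw [← Set.ncard_coe_finset, hTfin.coe_toFinset]; exact hcard
    · rintro ⟨S, ⟨⟨hsub, hface, hcard⟩, rfl⟩⟩
      exact ⟨hface, by rw [Set.ncard_coe_finset]; exact hcard⟩
  rw [bcFaceCount, himg, Set.ncard_image_of_injective _ Finset.coe_injective,
    Set.ncard_coe_finset]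

lemma bcFaceCount_order_indep (hE : M.E.Finite) (σ τ : LinearOrder α) (i : ℕ) :
    bcFaceCount M σ i = bcFaceCount M τ i := by
  rw [bcFaceCount_eq_card hE σ i, bcFaceCount_eq_card hE τ i]
  exact count_eq hE σ τ i

end BCAux
end Part5

/-- For a loopless matroid `M` of rank `r` on a finite ground set, the `h`-polynomial of
the `σ`-broken circuit complex does not depend on the linear order `σ`. -/
theorem stmt4 {α : Type*} (M : Matroid α) (hE : M.E.Finite)
    (hloopless : ∀ e : α, ¬ MatCircuit M {e})
    (r : ℕ) (hrank : ∃ B : Set α, M.IsBase B ∧ B.ncard = r)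
    (σ τ : LinearOrder α) :
    bcHPoly M σ r = bcHPoly M τ r := by
  letI : DecidableEq α := Classical.decEq α
  have hcount : ∀ i, bcFaceCount M σ i = bcFaceCount M τ i := fun i =>
    BCAux.bcFaceCount_order_indep hE σ τ i
  unfold bcHPoly
  exact Finset.sum_congr rfl (fun i _ => by rw [hcount i])
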